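/- For every natural number n ≥ 0, over the theory DB₀ the schema Sep(Σ_{n+1}) (separation with parameters for Σ_{n+1} formulas) is deductively equivalent to the schema Sep⁻(Σ_{n+1}) (parameter-free separation for Σ_{n+1} formulas). -/

import Mathlib

/- A deep embedding of the first-order language of set theory L_∈ = {∈, =},
   with named variables indexed by ℕ. -/

namespace FOSet

/-- Formulas of L_∈ with variables indexed by ℕ. -/
inductive Fml : Type
  | mem : ℕ → ℕ → Fml
  | eq  : ℕ → ℕ → Fml
  | not : Fml → Fml
  | and : Fml → Fml → Fml
  | or  : Fml → Fml → Fml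
  | imp : Fml → Fml → Fml
  | all : ℕ → Fml → Fml
  | ex  : ℕ → Fml → Fml

namespace Fml

/-- Free variables of a formula. -/
def fv : Fml → Set ℕ
  | mem i j => {i, j}
  | eq i j  => {i, j}
  | not φ   => φ.fv
  | and φ ψ => φ.fv ∪ ψ.fv
  | or φ ψ  => φ.fv ∪ ψ.fv
  | imp φ ψ => φ.fv ∪ ψ.fv
  | all i φ => φ.fv \ {i}
  | ex i φ  => φ.fv \ {i}

end Fml

/-- Satisfaction, in the substructure of `(N, E)` with domain `S`, of a formula
under a valuation `v` : quantifiers range over `S`. -/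
def SatIn {N : Type} (E : N → N → Prop) (S : Set N) : (ℕ → N) → Fml → Prop
  | v, .mem i j => E (v i) (v j)
  | v, .eq i j  => v i = v j
  | v, .not φ   => ¬ SatIn E S v φ
  | v, .and φ ψ => SatIn E S v φ ∧ SatIn E S v ψ
  | v, .or φ ψ  => SatIn E S v φ ∨ SatIn E S v ψ
  | v, .imp φ ψ => SatIn E S v φ → SatIn E S v ψ
  | v, .all i φ => ∀ a ∈ S, SatIn E S (Function.update v i a) φ
  | v, .ex i φ  => ∃ a ∈ S, SatIn E S (Function.update v i a) φ

/-- Satisfaction in the full structure `(N, E)`. -/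
def Sat {N : Type} (E : N → N → Prop) (v : ℕ → N) (φ : Fml) : Prop :=
  SatIn E Set.univ v φ

/-- Δ₀ (= Σ₀ = Π₀) formulas: every quantifier is bounded, i.e. of the form
`∀ x ∈ y` or `∃ x ∈ y`. -/
inductive IsDelta0 : Fml → Prop
  | mem (i j : ℕ) : IsDelta0 (Fml.mem i j)
  | eq (i j : ℕ)  : IsDelta0 (Fml.eq i j)
  | not {φ} : IsDelta0 φ → IsDelta0 φ.not
  | and {φ ψ} : IsDelta0 φ → IsDelta0 ψ → IsDelta0 (φ.and ψ)
  | or {φ ψ}  : IsDelta0 φ → IsDelta0 ψ → IsDelta0 (φ.or ψ)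
  | imp {φ ψ} : IsDelta0 φ → IsDelta0 ψ → IsDelta0 (φ.imp ψ)
  | ball {i j : ℕ} {φ} : i ≠ j → IsDelta0 φ →
      IsDelta0 (Fml.all i ((Fml.mem i j).imp φ))
  | bex {i j : ℕ} {φ} : i ≠ j → IsDelta0 φ →
      IsDelta0 (Fml.ex i ((Fml.mem i j).and φ))

/-- The Lévy hierarchy: `(levels n).1` is the class of Σ_n formulas and
`(levels n).2` the class of Π_n formulas. -/
def levels : ℕ → (Fml → Prop) × (Fml → Prop)
  | 0 => (IsDelta0, IsDelta0)
  | n + 1 =>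
      (fun φ => ∃ i ψ, (levels n).2 ψ ∧ φ = Fml.ex i ψ,
       fun φ => ∃ i ψ, (levels n).1 ψ ∧ φ = Fml.all i ψ)

def IsSigma (n : ℕ) : Fml → Prop := (levels n).1

def IsPi (n : ℕ) : Fml → Prop := (levels n).2

variable {M N : Type}

/-- `p` is the (Kuratowski) pair `{a, b}` in the sense of `E`. -/
def IsPairOf (E : M → M → Prop) (p a b : M) : Prop :=
  ∀ w, E w p ↔ (w = a ∨ w = b)

/-- `z` is the ordered pair `(a, b)` (Kuratowski) in the sense of `E`. -/
def IsOPairOf (E : M → M → Prop) (z a b : M) : Prop :=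
  ∃ s t, IsPairOf E s a a ∧ IsPairOf E t a b ∧ IsPairOf E z s t

/-- Valuation sending variable 0 to `x` and every other variable to `y`;
used for formulas φ(x, y) with free variables among {0, 1}. -/
def val2 (x y : M) : ℕ → M := fun k => if k = 0 then x else y

/-- Valuation sending 0 ↦ x, 1 ↦ y, everything else ↦ v;
used for formulas φ(x, y, v) with free variables among {0, 1, 2}. -/
def val3 (x y v : M) : ℕ → M := fun k => if k = 0 then x else if k = 1 then y else v

/-- `M ⊨ Sep(φ)` for φ = φ(x, v) (x is variable 0, v is variable 1):
∀v∀p∃q∀x(x∈q ↔ x∈p ∧ φ(x,v)). -/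
def SepAx (E : M → M → Prop) (φ : Fml) : Prop :=
  ∀ v p : M, ∃ q : M, ∀ x : M, E x q ↔ (E x p ∧ Sat E (val2 x v) φ)

/-- `M ⊨ Sep⁻(φ)` for a parameter-free φ = φ(x) (x is variable 0). -/
def SepMinusAx (E : M → M → Prop) (φ : Fml) : Prop :=
  ∀ p : M, ∃ q : M, ∀ x : M, E x q ↔ (E x p ∧ Sat E (fun _ => x) φ)

/-- `(M, E) ⊨ DB₀`: extensionality, empty set, pairing, union, cartesian
product, and Δ₀ separation. -/
def SatDB0 (E : M → M → Prop) : Prop :=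
  (∀ a b : M, (∀ x, E x a ↔ E x b) → a = b) ∧
  (∃ e : M, ∀ x, ¬ E x e) ∧
  (∀ a b : M, ∃ p, IsPairOf E p a b) ∧
  (∀ a : M, ∃ u, ∀ x, E x u ↔ ∃ y, E y a ∧ E x y) ∧
  (∀ a b : M, ∃ c, ∀ z, E z c ↔ ∃ x y, E x a ∧ E y b ∧ IsOPairOf E z x y) ∧
  (∀ φ, IsDelta0 φ → φ.fv ⊆ {0, 1} → SepAx E φ)

/-- `M ⊨ Coll(φ)` for φ = φ(x, y, v) (x = var 0, y = var 1, v = var 2):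
∀v∀p(∀x∈p ∃y φ → ∃q ∀x∈p ∃y∈q φ). -/
def CollAx (E : M → M → Prop) (φ : Fml) : Prop :=
  ∀ v p : M, (∀ x, E x p → ∃ y, Sat E (val3 x y v) φ) →
    ∃ q, ∀ x, E x p → ∃ y, E y q ∧ Sat E (val3 x y v) φ

/-- `M ⊨ Coll_s(φ)`: ∀v∀p∃q∀x∈p(∃y φ ↔ ∃y∈q φ). -/
def CollSAx (E : M → M → Prop) (φ : Fml) : Prop :=
  ∀ v p : M, ∃ q, ∀ x, E x p →
    ((∃ y, Sat E (val3 x y v) φ) ↔ ∃ y, E y q ∧ Sat E (val3 x y v) φ)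

/-- `M ⊨ Coll_w(φ)`: ∀v(∀x∃y φ → ∀p∃q∀x∈p∃y∈q φ). -/
def CollWAx (E : M → M → Prop) (φ : Fml) : Prop :=
  ∀ v : M, (∀ x, ∃ y, Sat E (val3 x y v) φ) →
    ∀ p, ∃ q, ∀ x, E x p → ∃ y, E y q ∧ Sat E (val3 x y v) φ

/-- `M ⊨ Coll⁻(φ)` for a parameter-free φ = φ(x, y) (x = var 0, y = var 1). -/
def CollMinusAx (E : M → M → Prop) (φ : Fml) : Prop :=
  ∀ p : M, (∀ x, E x p → ∃ y, Sat E (val2 x y) φ) →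
    ∃ q, ∀ x, E x p → ∃ y, E y q ∧ Sat E (val2 x y) φ

/-- `M ⊨ Coll_w⁻(φ)` for a parameter-free φ = φ(x, y). -/
def CollWMinusAx (E : M → M → Prop) (φ : Fml) : Prop :=
  (∀ x : M, ∃ y, Sat E (val2 x y) φ) →
    ∀ p, ∃ q, ∀ x, E x p → ∃ y, E y q ∧ Sat E (val2 x y) φ

/-- `M ⊨ Coll_s⁻(φ)` for a parameter-free φ = φ(x, y). -/
def CollSMinusAx (E : M → M → Prop) (φ : Fml) : Prop :=
  ∀ p : M, ∃ q, ∀ x, E x p →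
    ((∃ y, Sat E (val2 x y) φ) ↔ ∃ y, E y q ∧ Sat E (val2 x y) φ)

/- Schemas over a class Γ of formulas. -/

def CollScheme (E : M → M → Prop) (Γ : Fml → Prop) : Prop :=
  ∀ φ, Γ φ → φ.fv ⊆ {0, 1, 2} → CollAx E φ

def CollSScheme (E : M → M → Prop) (Γ : Fml → Prop) : Prop :=
  ∀ φ, Γ φ → φ.fv ⊆ {0, 1, 2} → CollSAx E φ

def CollWScheme (E : M → M → Prop) (Γ : Fml → Prop) : Prop :=
  ∀ φ, Γ φ → φ.fv ⊆ {0, 1, 2} → CollWAx E φ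

def CollMinusScheme (E : M → M → Prop) (Γ : Fml → Prop) : Prop :=
  ∀ φ, Γ φ → φ.fv ⊆ {0, 1} → CollMinusAx E φ

def CollWMinusScheme (E : M → M → Prop) (Γ : Fml → Prop) : Prop :=
  ∀ φ, Γ φ → φ.fv ⊆ {0, 1} → CollWMinusAx E φ

def CollSMinusScheme (E : M → M → Prop) (Γ : Fml → Prop) : Prop :=
  ∀ φ, Γ φ → φ.fv ⊆ {0, 1} → CollSMinusAx E φ

def SepScheme (E : M → M → Prop) (Γ : Fml → Prop) : Prop :=
  ∀ φ, Γ φ → φ.fv ⊆ {0, 1} → SepAx E φ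

def SepMinusScheme (E : M → M → Prop) (Γ : Fml → Prop) : Prop :=
  ∀ φ, Γ φ → φ.fv ⊆ {0} → SepMinusAx E φ

/- Extensions. We present an extension `M ⊆ N` by an embedding `f : M → N`. -/

/-- `f` embeds `(M, EM)` as a substructure of `(N, EN)`. -/
def SubStr (EM : M → M → Prop) (EN : N → N → Prop) (f : M → N) : Prop :=
  Function.Injective f ∧ ∀ a b : M, EM a b ↔ EN (f a) (f b)

/-- `f : M → N` is a (fully) elementary embedding. -/
def ElemEmb (EM : M → M → Prop) (EN : N → N → Prop) (f : M → N) : Prop :=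
  ∀ (φ : Fml) (v : ℕ → M), Sat EM v φ ↔ Sat EN (f ∘ v) φ

/-- `f : M → N` is a Σ_n-elementary embedding (M ≺_{Σ_n} N). -/
def SigmaElemEmb (n : ℕ) (EM : M → M → Prop) (EN : N → N → Prop) (f : M → N) : Prop :=
  ∀ φ, IsSigma n φ → ∀ v : ℕ → M, Sat EM v φ ↔ Sat EN (f ∘ v) φ

/-- `f : M → N` is a Δ₀-elementary embedding (M ≺_{Δ₀} N). -/
def Delta0ElemEmb (EM : M → M → Prop) (EN : N → N → Prop) (f : M → N) : Prop :=
  ∀ φ, IsDelta0 φ → ∀ v : ℕ → M, Sat EM v φ ↔ Sat EN (f ∘ v) φ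

/-- The convex hull M* of (the image of) M in N:
{a ∈ N : N ⊨ a ∈ m for some m ∈ M}. -/
def hull (EN : N → N → Prop) (f : M → N) : Set N := {a | ∃ m : M, EN a (f m)}

/-- The substructure of `N` with domain `S` is a Σ_n-elementary substructure of
`N` (S ≺_{Σ_n} N). -/
def SigmaElemInTop (n : ℕ) (EN : N → N → Prop) (S : Set N) : Prop :=
  ∀ φ, IsSigma n φ → ∀ v : ℕ → N, (∀ k, v k ∈ S) → (SatIn EN S v φ ↔ Sat EN v φ)

/-- The substructure of `N` with domain `S` is a fully elementary substructure. -/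
def ElemInTop (EN : N → N → Prop) (S : Set N) : Prop :=
  ∀ (φ : Fml) (v : ℕ → N), (∀ k, v k ∈ S) → (SatIn EN S v φ ↔ Sat EN v φ)

/-- `f` is a Σ_n-elementary embedding of `M` into the substructure of `N` with
domain `S` (e.g. M ≺_{Σ_n} M*). -/
def SigmaElemEmbInto (n : ℕ) (EM : M → M → Prop) (EN : N → N → Prop) (f : M → N)
    (S : Set N) : Prop :=
  ∀ φ, IsSigma n φ → ∀ v : ℕ → M, Sat EM v φ ↔ SatIn EN S (f ∘ v) φ

/-- `f` is a fully elementary embedding of `M` into the substructure of `N`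
with domain `S`. -/
def ElemEmbInto (EM : M → M → Prop) (EN : N → N → Prop) (f : M → N) (S : Set N) : Prop :=
  ∀ (φ : Fml) (v : ℕ → M), Sat EM v φ ↔ SatIn EN S (f ∘ v) φ

/-- The extension presented by `f` is an end extension. -/
def IsEndEmb (EN : N → N → Prop) (f : M → N) : Prop :=
  ∀ (m : M) (a : N), EN a (f m) → ∃ m', f m' = a

/-- The extension presented by `f` is cofinal. -/
def Cofinal (EN : N → N → Prop) (f : M → N) : Prop :=
  ∀ a : N, ∃ m : M, EN a (f m)

/-- `a` is a transitive set in the sense of `(N, EN)`. -/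
def TransIn (EN : N → N → Prop) (a : N) : Prop :=
  ∀ x, EN x a → ∀ y, EN y x → EN y a

/-- The extension presented by `f` is taller. -/
def Taller (EN : N → N → Prop) (f : M → N) : Prop :=
  ∃ a : N, ∀ m : M, EN (f m) a

/-- The extension presented by `f` is taller*. -/
def TallerStar (EN : N → N → Prop) (f : M → N) : Prop :=
  ∃ a : N, (∀ m : M, EN (f m) a) ∧ TransIn EN a

/-- Property end_n: for every elementary extension N of M, M* ≺_{Σ_n} N. -/
def HasEnd (n : ℕ) (EM : M → M → Prop) : Prop :=
  ∀ (N : Type) (EN : N → N → Prop) (f : M → N), ElemEmb EM EN f →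
    SigmaElemInTop n EN (hull EN f)

/-- Property cof_n: for every elementary extension N of M, M ≺_{Σ_n} M*. -/
def HasCof (n : ℕ) (EM : M → M → Prop) : Prop :=
  ∀ (N : Type) (EN : N → N → Prop) (f : M → N), ElemEmb EM EN f →
    SigmaElemEmbInto n EM EN f (hull EN f)

/-- Property COF_n: for every Δ₀-elementary cofinal extension N of M with
N ⊨ DB₀, M ≺_{Σ_n} N. -/
def HasCOF (n : ℕ) (EM : M → M → Prop) : Prop :=
  ∀ (N : Type) (EN : N → N → Prop) (f : M → N), SatDB0 EN →
    Delta0ElemEmb EM EN f → Cofinal EN f → SigmaElemEmb n EM EN f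

/-- TCo: every set is an element of some transitive set. -/
def SatTCo (E : M → M → Prop) : Prop :=
  ∀ a : M, ∃ t, E a t ∧ TransIn E t

/-- `a` is an ordinal in the sense of `(M, E)`: a transitive set linearly
ordered by `E`. -/
def OrdIn (E : M → M → Prop) (a : M) : Prop :=
  TransIn E a ∧ ∀ x y, E x a → E y a → (E x y ∨ x = y ∨ E y x)

/-- The formula φ(p, α, v) (p = var 0, α = var 1, v = var 2), with parameter
`v ∈ M`, defines a resolution on `(M, E)`. -/
def IsResolution (E : M → M → Prop) (φ : Fml) (v : M) : Prop :=
  φ.fv ⊆ {0, 1, 2} ∧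
  (∀ α, OrdIn E α → ∃! p, Sat E (val3 p α v) φ) ∧
  (∀ α β p q, E α β → Sat E (val3 p α v) φ → Sat E (val3 q β v) φ →
    ∀ x, E x p → E x q) ∧
  (∀ x, ∃ α, OrdIn E α ∧ ∀ p, Sat E (val3 p α v) φ → E x p)

end FOSet

namespace FOSet

section Infra

open Fml

variable {M N : Type}

/-! ### Basic satisfaction lemmas -/

theorem sat_mem {E : N → N → Prop} {v : ℕ → N} {i j : ℕ} :
    Sat E v (.mem i j) ↔ E (v i) (v j) := Iff.rfl

theorem sat_ex {E : N → N → Prop} {v : ℕ → N} {i : ℕ} {φ : Fml} :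
    Sat E v (.ex i φ) ↔ ∃ a, Sat E (Function.update v i a) φ := by
  simp [Sat, SatIn]

theorem sat_all {E : N → N → Prop} {v : ℕ → N} {i : ℕ} {φ : Fml} :
    Sat E v (.all i φ) ↔ ∀ a, Sat E (Function.update v i a) φ := by
  simp [Sat, SatIn]

theorem satIn_congr {E : N → N → Prop} {S : Set N} :
    ∀ (φ : Fml) {v w : ℕ → N}, (∀ k ∈ φ.fv, v k = w k) →
      (SatIn E S v φ ↔ SatIn E S w φ) := by
  intro φ
  induction φ with
  | mem i j =>
      intro v w h
      simp only [SatIn]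
      rw [h i (by simp [fv]), h j (by simp [fv])]
  | eq i j =>
      intro v w h
      simp only [SatIn]
      rw [h i (by simp [fv]), h j (by simp [fv])]
  | not φ ih =>
      intro v w h
      simp only [SatIn]
      rw [ih h]
  | and φ ψ ih1 ih2 =>
      intro v w h; simp only [SatIn]
      rw [ih1 (fun k hk => h k (Or.inl hk)), ih2 (fun k hk => h k (Or.inr hk))]
  | or φ ψ ih1 ih2 =>
      intro v w h; simp only [SatIn]
      rw [ih1 (fun k hk => h k (Or.inl hk)), ih2 (fun k hk => h k (Or.inr hk))]
  | imp φ ψ ih1 ih2 =>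
      intro v w h; simp only [SatIn]
      rw [ih1 (fun k hk => h k (Or.inl hk)), ih2 (fun k hk => h k (Or.inr hk))]
  | all i φ ih =>
      intro v w h; simp only [SatIn]
      refine forall₂_congr fun a _ => ih fun k hk => ?_
      rcases Decidable.eq_or_ne k i with rfl | hne
      · simp
      · simp only [Function.update_of_ne hne]
        exact h k ⟨hk, hne⟩
  | ex i φ ih =>
      intro v w h; simp only [SatIn]
      refine exists_congr fun a => and_congr_right fun _ => ih fun k hk => ?_
      rcases Decidable.eq_or_ne k i with rfl | hne
      · simp
      · simp only [Function.update_of_ne hne]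
        exact h k ⟨hk, hne⟩

theorem sat_congr {E : N → N → Prop} (φ : Fml) {v w : ℕ → N}
    (h : ∀ k ∈ φ.fv, v k = w k) : Sat E v φ ↔ Sat E w φ :=
  satIn_congr φ h

/-! ### Renaming -/

/-- Rename all variables (free and bound) of a formula. -/
def renameF (ρ : ℕ → ℕ) : Fml → Fml
  | .mem i j => .mem (ρ i) (ρ j)
  | .eq i j  => .eq (ρ i) (ρ j)
  | .not φ   => .not (renameF ρ φ)
  | .and φ ψ => .and (renameF ρ φ) (renameF ρ ψ)
  | .or φ ψ  => .or (renameF ρ φ) (renameF ρ ψ)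
  | .imp φ ψ => .imp (renameF ρ φ) (renameF ρ ψ)
  | .all i φ => .all (ρ i) (renameF ρ φ)
  | .ex i φ  => .ex (ρ i) (renameF ρ φ)

theorem fv_renameF (ρ : ℕ → ℕ) : ∀ φ : Fml, (renameF ρ φ).fv ⊆ ρ '' φ.fv := by
  intro φ
  induction φ with
  | mem i j => simp [renameF, fv, Set.image_pair]
  | eq i j => simp [renameF, fv, Set.image_pair]
  | not φ ih => exact ih
  | and φ ψ ih1 ih2 =>
      intro k hk
      rcases hk with hk | hk
      · rcases ih1 hk with ⟨m, hm, rfl⟩; exact ⟨m, Or.inl hm, rfl⟩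
      · rcases ih2 hk with ⟨m, hm, rfl⟩; exact ⟨m, Or.inr hm, rfl⟩
  | or φ ψ ih1 ih2 =>
      intro k hk
      rcases hk with hk | hk
      · rcases ih1 hk with ⟨m, hm, rfl⟩; exact ⟨m, Or.inl hm, rfl⟩
      · rcases ih2 hk with ⟨m, hm, rfl⟩; exact ⟨m, Or.inr hm, rfl⟩
  | imp φ ψ ih1 ih2 =>
      intro k hk
      rcases hk with hk | hk
      · rcases ih1 hk with ⟨m, hm, rfl⟩; exact ⟨m, Or.inl hm, rfl⟩
      · rcases ih2 hk with ⟨m, hm, rfl⟩; exact ⟨m, Or.inr hm, rfl⟩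
  | all i φ ih =>
      intro k hk
      rcases hk with ⟨hk, hki⟩
      rcases ih hk with ⟨m, hm, rfl⟩
      exact ⟨m, ⟨hm, fun h => hki (congrArg ρ h)⟩, rfl⟩
  | ex i φ ih =>
      intro k hk
      rcases hk with ⟨hk, hki⟩
      rcases ih hk with ⟨m, hm, rfl⟩
      exact ⟨m, ⟨hm, fun h => hki (congrArg ρ h)⟩, rfl⟩

end Infra
section Infra2

open Fml

variable {M N : Type}

theorem update_comp_of_injective {ρ : ℕ → ℕ} (hρ : Function.Injective ρ)
    (v : ℕ → N) (i : ℕ) (a : N) :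
    (Function.update v (ρ i) a) ∘ ρ = Function.update (v ∘ ρ) i a := by
  funext k
  rcases Decidable.eq_or_ne k i with rfl | hne
  · simp [Function.comp]
  · simp [Function.comp, Function.update_of_ne hne, Function.update_of_ne (fun h => hne (hρ h))]

theorem satIn_renameF {E : N → N → Prop} {S : Set N} {ρ : ℕ → ℕ}
    (hρ : Function.Injective ρ) :
    ∀ (φ : Fml) (v : ℕ → N), SatIn E S v (renameF ρ φ) ↔ SatIn E S (v ∘ ρ) φ := by
  intro φ
  induction φ with
  | mem i j => intro v; exact Iff.rfl
  | eq i j => intro v; exact Iff.rfl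
  | not φ ih =>
      intro v
      simp only [renameF, SatIn]
      rw [ih]
  | and φ ψ ih1 ih2 =>
      intro v
      simp only [renameF, SatIn]
      rw [ih1, ih2]
  | or φ ψ ih1 ih2 =>
      intro v
      simp only [renameF, SatIn]
      rw [ih1, ih2]
  | imp φ ψ ih1 ih2 =>
      intro v
      simp only [renameF, SatIn]
      rw [ih1, ih2]
  | all i φ ih =>
      intro v
      simp only [renameF, SatIn]
      refine forall₂_congr fun a _ => ?_
      rw [ih, update_comp_of_injective hρ]
  | ex i φ ih =>
      intro v
      simp only [renameF, SatIn]
      refine exists_congr fun a => and_congr_right fun _ => ?_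
      rw [ih, update_comp_of_injective hρ]

theorem sat_renameF {E : N → N → Prop} {ρ : ℕ → ℕ} (hρ : Function.Injective ρ)
    (φ : Fml) (v : ℕ → N) : Sat E v (renameF ρ φ) ↔ Sat E (v ∘ ρ) φ :=
  satIn_renameF hρ φ v

theorem isDelta0_renameF {ρ : ℕ → ℕ} (hρ : Function.Injective ρ) :
    ∀ {φ : Fml}, IsDelta0 φ → IsDelta0 (renameF ρ φ) := by
  intro φ h
  induction h with
  | mem i j => exact IsDelta0.mem _ _
  | eq i j => exact IsDelta0.eq _ _
  | not _ ih => exact IsDelta0.not ih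
  | and _ _ ih1 ih2 => exact IsDelta0.and ih1 ih2
  | or _ _ ih1 ih2 => exact IsDelta0.or ih1 ih2
  | imp _ _ ih1 ih2 => exact IsDelta0.imp ih1 ih2
  | ball hij _ ih => exact IsDelta0.ball (fun h => hij (hρ h)) ih
  | bex hij _ ih => exact IsDelta0.bex (fun h => hij (hρ h)) ih

theorem isSigma_zero_eq : IsSigma 0 = IsDelta0 := rfl
theorem isPi_zero_eq : IsPi 0 = IsDelta0 := rfl

theorem isSigma_succ_iff {n : ℕ} {φ : Fml} :
    IsSigma (n + 1) φ ↔ ∃ i ψ, IsPi n ψ ∧ φ = Fml.ex i ψ := Iff.rfl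

theorem isPi_succ_iff {n : ℕ} {φ : Fml} :
    IsPi (n + 1) φ ↔ ∃ i ψ, IsSigma n ψ ∧ φ = Fml.all i ψ := Iff.rfl

theorem isSigma_isPi_renameF {ρ : ℕ → ℕ} (hρ : Function.Injective ρ) :
    ∀ n : ℕ, (∀ {φ : Fml}, IsSigma n φ → IsSigma n (renameF ρ φ)) ∧
      (∀ {φ : Fml}, IsPi n φ → IsPi n (renameF ρ φ)) := by
  intro n
  induction n with
  | zero => exact ⟨fun h => isDelta0_renameF hρ h, fun h => isDelta0_renameF hρ h⟩
  | succ n ih =>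
      constructor
      · rintro φ ⟨i, ψ, hψ, rfl⟩
        exact ⟨ρ i, renameF ρ ψ, ih.2 hψ, rfl⟩
      · rintro φ ⟨i, ψ, hψ, rfl⟩
        exact ⟨ρ i, renameF ρ ψ, ih.1 hψ, rfl⟩

theorem isSigma_renameF {ρ : ℕ → ℕ} (hρ : Function.Injective ρ) {n : ℕ} {φ : Fml}
    (h : IsSigma n φ) : IsSigma n (renameF ρ φ) := (isSigma_isPi_renameF hρ n).1 h

theorem isPi_renameF {ρ : ℕ → ℕ} (hρ : Function.Injective ρ) {n : ℕ} {φ : Fml}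
    (h : IsPi n φ) : IsPi n (renameF ρ φ) := (isSigma_isPi_renameF hρ n).2 h

/-! ### Alpha conversion -/

theorem update_swap_agree {i j : ℕ} (hij : i ≠ j) (v : ℕ → N) (a : N) (k : ℕ)
    (hk : k ≠ j) :
    (Function.update v j a) ((Equiv.swap i j) k) = Function.update v i a k := by
  rcases Decidable.eq_or_ne k i with rfl | hki
  · rw [Equiv.swap_apply_left, Function.update_self, Function.update_self]
  · rw [Equiv.swap_apply_of_ne_of_ne hki hk,
      Function.update_of_ne hk, Function.update_of_ne hki]

theorem sat_ex_alpha {E : N → N → Prop} {i j : ℕ} {ψ : Fml} (hij : i ≠ j)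
    (hj : j ∉ ψ.fv) (v : ℕ → N) :
    Sat E v (.ex j (renameF (Equiv.swap i j) ψ)) ↔ Sat E v (.ex i ψ) := by
  rw [sat_ex, sat_ex]
  refine exists_congr fun a => ?_
  rw [sat_renameF (Equiv.injective _)]
  exact sat_congr ψ fun k hk => update_swap_agree hij v a k (fun h => hj (h ▸ hk))

theorem sat_all_alpha {E : N → N → Prop} {i j : ℕ} {ψ : Fml} (hij : i ≠ j)
    (hj : j ∉ ψ.fv) (v : ℕ → N) :
    Sat E v (.all j (renameF (Equiv.swap i j) ψ)) ↔ Sat E v (.all i ψ) := by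
  rw [sat_all, sat_all]
  refine forall_congr' fun a => ?_
  rw [sat_renameF (Equiv.injective _)]
  exact sat_congr ψ fun k hk => update_swap_agree hij v a k (fun h => hj (h ▸ hk))

end Infra2
section Infra3

open Fml

variable {M : Type}

theorem opair_unique {E : M → M → Prop} {z x w x' w' : M}
    (h : IsOPairOf E z x w) (h' : IsOPairOf E z x' w') : x = x' ∧ w = w' := by
  obtain ⟨S, T, hS, hT, hz⟩ := h
  obtain ⟨S', T', hS', hT', hz'⟩ := h'
  have hxx : x = x' := by
    have hS'z : E S' z := (hz' S').mpr (Or.inl rfl)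
    rcases (hz S').mp hS'z with h1 | h1
    · have : E x' S' := (hS' x').mpr (Or.inl rfl)
      rw [h1] at this
      rcases (hS x').mp this with h2 | h2 <;> exact h2.symm
    · have : E x T := (hT x).mpr (Or.inl rfl)
      rw [← h1] at this
      rcases (hS' x).mp this with h2 | h2 <;> exact h2
  refine ⟨hxx, ?_⟩
  have hT'z : E T' z := (hz' T').mpr (Or.inr rfl)
  have hw' : E w' T' := (hT' w').mpr (Or.inr rfl)
  rcases (hz T').mp hT'z with h1 | h1
  · -- T' = S
    rw [h1] at hw'
    have hw'x : w' = x := by rcases (hS w').mp hw' with h2 | h2 <;> exact h2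
    have hTz' : E T z := (hz T).mpr (Or.inr rfl)
    have hwT : E w T := (hT w).mpr (Or.inr rfl)
    rcases (hz' T).mp hTz' with h3 | h3
    · rw [h3] at hwT
      have h4 : w = x' := by rcases (hS' w).mp hwT with h4 | h4 <;> exact h4
      exact h4.trans (hxx.symm.trans hw'x.symm)
    · rw [h3] at hwT
      rcases (hT' w).mp hwT with h4 | h4
      · exact h4.trans (hxx.symm.trans hw'x.symm)
      · exact h4
  · -- T' = T
    rw [h1] at hw'
    rcases (hT w').mp hw' with h2 | h2
    · -- w' = x
      have hwT : E w T := (hT w).mpr (Or.inr rfl)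
      rw [← h1] at hwT
      rcases (hT' w).mp hwT with h4 | h4
      · exact h4.trans (hxx.symm.trans h2.symm)
      · exact h4
    · exact h2.symm

/-- Update slots 1 and 2 of a valuation. -/
def upd12 (v : ℕ → M) (x w : M) : ℕ → M :=
  Function.update (Function.update v 1 x) 2 w

theorem delta0_block (E : M → M → Prop) {σ : Fml} (hσ : IsDelta0 σ) (B : ℕ)
    (hB : 3 ≤ B) (hfv : σ.fv ⊆ Set.Iio B) :
    ∃ τ, IsDelta0 τ ∧ τ.fv ⊆ insert 0 (σ.fv \ {1, 2}) ∧
      ∀ (v : ℕ → M) (x w : M), IsOPairOf E (v 0) x w →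
        (Sat E v τ ↔ Sat E (upd12 v x w) σ) := by
  set δ : Fml :=
    (Fml.all (B+2) ((Fml.mem (B+2) B).imp (Fml.eq (B+2) 1))).and
    ((Fml.mem 1 (B+1)).and ((Fml.mem 2 (B+1)).and
      ((Fml.all (B+2) ((Fml.mem (B+2) (B+1)).imp ((Fml.eq (B+2) 1).or (Fml.eq (B+2) 2)))).and
        (Fml.all (B+2) ((Fml.mem (B+2) 0).imp ((Fml.eq (B+2) B).or (Fml.eq (B+2) (B+1)))))))) with hδ
  refine ⟨.ex B ((Fml.mem B 0).and (.ex 1 ((Fml.mem 1 B).and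
    (.ex (B+1) ((Fml.mem (B+1) 0).and (.ex 2 ((Fml.mem 2 (B+1)).and (δ.and σ)))))))),
    ?_, ?_, ?_⟩
  · exact .bex (by omega) (.bex (by omega) (.bex (by omega) (.bex (by omega)
      (.and (.and (.ball (by omega) (.eq _ _)) (.and (.mem _ _) (.and (.mem _ _)
        (.and (.ball (by omega) (.or (.eq _ _) (.eq _ _)))
          (.ball (by omega) (.or (.eq _ _) (.eq _ _))))))) hσ))))
  · intro k hk
    simp only [fv, hδ, Set.mem_diff, Set.mem_union, Set.mem_insert_iff,
      Set.mem_singleton_iff] at hk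
    simp only [Set.mem_insert_iff, Set.mem_diff, Set.mem_singleton_iff]
    tauto
  · intro v x w hp
    simp only [Sat, SatIn, Set.mem_univ, true_and, true_implies, hδ,
      Function.update_self,
      Function.update_of_ne (by omega : (0:ℕ) ≠ B),
      Function.update_of_ne (by omega : (0:ℕ) ≠ 1),
      Function.update_of_ne (by omega : (0:ℕ) ≠ 2),
      Function.update_of_ne (by omega : (0:ℕ) ≠ B+1),
      Function.update_of_ne (by omega : (0:ℕ) ≠ B+2),
      Function.update_of_ne (by omega : (1:ℕ) ≠ 2),
      Function.update_of_ne (by omega : (1:ℕ) ≠ B+1),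
      Function.update_of_ne (by omega : (1:ℕ) ≠ B+2),
      Function.update_of_ne (by omega : (1:ℕ) ≠ B),
      Function.update_of_ne (by omega : (2:ℕ) ≠ B+1),
      Function.update_of_ne (by omega : (2:ℕ) ≠ B+2),
      Function.update_of_ne (by omega : (2:ℕ) ≠ B),
      Function.update_of_ne (by omega : (2:ℕ) ≠ 1),
      Function.update_of_ne (by omega : B ≠ 1),
      Function.update_of_ne (by omega : B ≠ 2),
      Function.update_of_ne (by omega : B ≠ B+1),
      Function.update_of_ne (by omega : B ≠ B+2),
      Function.update_of_ne (by omega : B+1 ≠ 1),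
      Function.update_of_ne (by omega : B+1 ≠ 2),
      Function.update_of_ne (by omega : B+1 ≠ B),
      Function.update_of_ne (by omega : B+1 ≠ B+2)]
    have agree : ∀ (S x' T w' : M), ∀ k ∈ σ.fv,
        Function.update (Function.update (Function.update
          (Function.update v B S) 1 x') (B+1) T) 2 w' k = upd12 v x' w' k := by
      intro S x' T w' k hk
      have hkB : k < B := hfv hk
      simp only [upd12, Function.update_apply]
      split_ifs <;> first | rfl | omega
    constructor
    · rintro ⟨S, hS0, x', hx'S, T, hT0, w', hw'T, ⟨g1, g2, g3, g4, g5⟩, hσs⟩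
      have hpair' : IsOPairOf E (v 0) x' w' := by
        refine ⟨S, T, fun u => ⟨fun hu => Or.inl (g1 u hu), fun hu => ?_⟩,
          fun u => ⟨g4 u, fun hu => ?_⟩, fun u => ⟨g5 u, fun hu => ?_⟩⟩
        · rcases hu with rfl | rfl <;> exact hx'S
        · rcases hu with rfl | rfl
          · exact g2
          · exact g3
        · rcases hu with rfl | rfl
          · exact hS0
          · exact hT0
      obtain ⟨hx, hw⟩ := opair_unique hp hpair'
      rw [hx, hw]
      exact (satIn_congr σ (agree S x' T w')).mp hσs
    · intro hσs
      obtain ⟨S, T, hS, hT, hz⟩ := hp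
      refine ⟨S, (hz S).mpr (Or.inl rfl), x, (hS x).mpr (Or.inl rfl),
        T, (hz T).mpr (Or.inr rfl), w, (hT w).mpr (Or.inr rfl),
        ⟨fun u hu => ((hS u).mp hu).elim id id, (hT x).mpr (Or.inl rfl),
          (hT w).mpr (Or.inr rfl), fun u hu => (hT u).mp hu,
          fun u hu => (hz u).mp hu⟩, ?_⟩
      exact (satIn_congr σ (agree S x T w)).mpr hσs

end Infra3
section Infra4

open Fml

variable {M : Type}

theorem swap_mem_or {q j m : ℕ} (hm : m ≠ j) :
    (Equiv.swap q j) m = j ∧ m = q ∨ (Equiv.swap q j) m = m ∧ m ≠ q := by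
  rcases Decidable.eq_or_ne m q with rfl | h
  · exact Or.inl ⟨Equiv.swap_apply_left _ _, rfl⟩
  · exact Or.inr ⟨Equiv.swap_apply_of_ne_of_ne h hm, h⟩

theorem pairBind (E : M → M → Prop) : ∀ n : ℕ,
    (∀ σ, IsSigma n σ → ∀ B, 3 ≤ B → σ.fv ⊆ Set.Iio B →
      ∃ τ, IsSigma n τ ∧ τ.fv ⊆ insert 0 (σ.fv \ {1, 2}) ∧
        ∀ (v : ℕ → M) (x w : M), IsOPairOf E (v 0) x w →
          (Sat E v τ ↔ Sat E (upd12 v x w) σ)) ∧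
    (∀ σ, IsPi n σ → ∀ B, 3 ≤ B → σ.fv ⊆ Set.Iio B →
      ∃ τ, IsPi n τ ∧ τ.fv ⊆ insert 0 (σ.fv \ {1, 2}) ∧
        ∀ (v : ℕ → M) (x w : M), IsOPairOf E (v 0) x w →
          (Sat E v τ ↔ Sat E (upd12 v x w) σ)) := by
  intro n
  induction n with
  | zero =>
      exact ⟨fun σ hσ B hB hfv => delta0_block E hσ B hB hfv,
        fun σ hσ B hB hfv => delta0_block E hσ B hB hfv⟩
  | succ n ih =>
      constructor
      · rintro σ ⟨q, σ', hσ', rfl⟩ B hB hfv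
        have hfv' : σ'.fv ⊆ Set.Iio B ∪ {q} := by
          intro k hk
          rcases Decidable.eq_or_ne k q with rfl | h
          · exact Or.inr rfl
          · exact Or.inl (hfv ⟨hk, h⟩)
        have hjfv : (B + q + 1) ∉ σ'.fv := by
          intro h
          rcases hfv' h with h | h
          · exact absurd h (by simp only [Set.mem_Iio]; omega)
          · simp only [Set.mem_singleton_iff] at h; omega
        have hfv'' : (renameF (Equiv.swap q (B + q + 1)) σ').fv ⊆ Set.Iio (B + q + 2) := by
          intro k hk
          rcases fv_renameF _ _ hk with ⟨m, hm, rfl⟩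
          rcases swap_mem_or (fun h : m = B + q + 1 => hjfv (h ▸ hm)) with ⟨h1, h2⟩ | ⟨h1, h2⟩
          · rw [h1]; simp only [Set.mem_Iio]; omega
          · rw [h1]
            rcases hfv' hm with h | h
            · simp only [Set.mem_Iio] at h ⊢; omega
            · simp only [Set.mem_singleton_iff] at h; simp only [Set.mem_Iio]; omega
        obtain ⟨τ', hτ'Pi, hτ'fv, hτ'sem⟩ := ih.2 (renameF (Equiv.swap q (B + q + 1)) σ')
          (isPi_renameF (Equiv.injective _) hσ') (B + q + 2) (by omega) hfv''
        refine ⟨.ex (B + q + 1) τ', ⟨B + q + 1, τ', hτ'Pi, rfl⟩, ?_, ?_⟩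
        · intro k hk
          obtain ⟨hk1, hk2⟩ := hk
          simp only [Set.mem_singleton_iff] at hk2
          rcases hτ'fv hk1 with h | ⟨h, hne⟩
          · exact Or.inl h
          · rcases fv_renameF _ _ h with ⟨m, hm, rfl⟩
            rcases swap_mem_or (fun hmj : m = B + q + 1 => hjfv (hmj ▸ hm)) with ⟨h1, h2⟩ | ⟨h1, h2⟩
            · exact absurd h1 hk2
            · rw [h1] at hne hk2 ⊢
              exact Or.inr ⟨⟨hm, h2⟩, hne⟩
        · intro v x w hp
          have hcomm : ∀ a : M, upd12 (Function.update v (B + q + 1) a) x w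
              = Function.update (upd12 v x w) (B + q + 1) a := by
            intro a
            funext k
            simp only [upd12, Function.update_apply]
            split_ifs <;> first | rfl | omega
          calc Sat E v (.ex (B + q + 1) τ')
              ↔ ∃ a, Sat E (Function.update v (B + q + 1) a) τ' := sat_ex
            _ ↔ ∃ a, Sat E (Function.update (upd12 v x w) (B + q + 1) a)
                  (renameF (Equiv.swap q (B + q + 1)) σ') := by
                refine exists_congr fun a => ?_
                rw [hτ'sem _ x w (by
                  rw [Function.update_of_ne (by omega : (0:ℕ) ≠ B + q + 1)]; exact hp),
                  hcomm a]
            _ ↔ Sat E (upd12 v x w) (.ex (B + q + 1) (renameF (Equiv.swap q (B + q + 1)) σ')) :=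
                sat_ex.symm
            _ ↔ Sat E (upd12 v x w) (.ex q σ') := sat_ex_alpha (by omega) hjfv _
      · rintro σ ⟨q, σ', hσ', rfl⟩ B hB hfv
        have hfv' : σ'.fv ⊆ Set.Iio B ∪ {q} := by
          intro k hk
          rcases Decidable.eq_or_ne k q with rfl | h
          · exact Or.inr rfl
          · exact Or.inl (hfv ⟨hk, h⟩)
        have hjfv : (B + q + 1) ∉ σ'.fv := by
          intro h
          rcases hfv' h with h | h
          · exact absurd h (by simp only [Set.mem_Iio]; omega)
          · simp only [Set.mem_singleton_iff] at h; omega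
        have hfv'' : (renameF (Equiv.swap q (B + q + 1)) σ').fv ⊆ Set.Iio (B + q + 2) := by
          intro k hk
          rcases fv_renameF _ _ hk with ⟨m, hm, rfl⟩
          rcases swap_mem_or (fun h : m = B + q + 1 => hjfv (h ▸ hm)) with ⟨h1, h2⟩ | ⟨h1, h2⟩
          · rw [h1]; simp only [Set.mem_Iio]; omega
          · rw [h1]
            rcases hfv' hm with h | h
            · simp only [Set.mem_Iio] at h ⊢; omega
            · simp only [Set.mem_singleton_iff] at h; simp only [Set.mem_Iio]; omega
        obtain ⟨τ', hτ'Si, hτ'fv, hτ'sem⟩ := ih.1 (renameF (Equiv.swap q (B + q + 1)) σ')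
          (isSigma_renameF (Equiv.injective _) hσ') (B + q + 2) (by omega) hfv''
        refine ⟨.all (B + q + 1) τ', ⟨B + q + 1, τ', hτ'Si, rfl⟩, ?_, ?_⟩
        · intro k hk
          obtain ⟨hk1, hk2⟩ := hk
          simp only [Set.mem_singleton_iff] at hk2
          rcases hτ'fv hk1 with h | ⟨h, hne⟩
          · exact Or.inl h
          · rcases fv_renameF _ _ h with ⟨m, hm, rfl⟩
            rcases swap_mem_or (fun hmj : m = B + q + 1 => hjfv (hmj ▸ hm)) with ⟨h1, h2⟩ | ⟨h1, h2⟩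
            · exact absurd h1 hk2
            · rw [h1] at hne hk2 ⊢
              exact Or.inr ⟨⟨hm, h2⟩, hne⟩
        · intro v x w hp
          have hcomm : ∀ a : M, upd12 (Function.update v (B + q + 1) a) x w
              = Function.update (upd12 v x w) (B + q + 1) a := by
            intro a
            funext k
            simp only [upd12, Function.update_apply]
            split_ifs <;> first | rfl | omega
          calc Sat E v (.all (B + q + 1) τ')
              ↔ ∀ a, Sat E (Function.update v (B + q + 1) a) τ' := sat_all
            _ ↔ ∀ a, Sat E (Function.update (upd12 v x w) (B + q + 1) a)
                  (renameF (Equiv.swap q (B + q + 1)) σ') := by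
                refine forall_congr' fun a => ?_
                rw [hτ'sem _ x w (by
                  rw [Function.update_of_ne (by omega : (0:ℕ) ≠ B + q + 1)]; exact hp),
                  hcomm a]
            _ ↔ Sat E (upd12 v x w) (.all (B + q + 1) (renameF (Equiv.swap q (B + q + 1)) σ')) :=
                sat_all.symm
            _ ↔ Sat E (upd12 v x w) (.all q σ') := sat_all_alpha (by omega) hjfv _

theorem main_theta (E : M → M → Prop) {n : ℕ} {φ : Fml} (hφ : IsSigma (n+1) φ)
    (hfv : φ.fv ⊆ {0, 1}) :
    ∃ θ, IsSigma (n+1) θ ∧ θ.fv ⊆ {0} ∧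
      ∀ (v : ℕ → M) (x w : M), IsOPairOf E (v 0) x w →
        (Sat E v θ ↔ Sat E (val2 x w) φ) := by
  obtain ⟨i, ψ0, hψ0, rfl⟩ := hφ
  have hψ0fv : ψ0.fv ⊆ {0, 1, i} := by
    intro k hk
    rcases Decidable.eq_or_ne k i with rfl | h
    · simp
    · have := hfv (⟨hk, h⟩ : k ∈ (Fml.ex i ψ0).fv)
      simp only [Set.mem_insert_iff, Set.mem_singleton_iff] at this ⊢
      tauto
  have hjψ0 : (i + 3) ∉ ψ0.fv := by
    intro h
    have := hψ0fv h
    simp only [Set.mem_insert_iff, Set.mem_singleton_iff] at this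
    omega
  have halpha : ∀ v : ℕ → M, Sat E v (.ex (i + 3) (renameF (Equiv.swap i (i + 3)) ψ0))
      ↔ Sat E v (.ex i ψ0) := sat_ex_alpha (by omega) hjψ0
  have hψ0a : IsPi n (renameF (Equiv.swap i (i + 3)) ψ0) :=
    isPi_renameF (Equiv.injective _) hψ0
  have hψ0afv : (renameF (Equiv.swap i (i + 3)) ψ0).fv ⊆ {0, 1, i + 3} := by
    intro k hk
    rcases fv_renameF _ _ hk with ⟨m, hm, rfl⟩
    have hmem := hψ0fv hm
    simp only [Set.mem_insert_iff, Set.mem_singleton_iff] at hmem ⊢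
    rcases swap_mem_or (fun h : m = i + 3 => hjψ0 (h ▸ hm)) with ⟨h1, h2⟩ | ⟨h1, h2⟩
    · tauto
    · rw [h1]; tauto
  -- the 3-cycle 0 ↦ 1 ↦ 2 ↦ 0
  have hρinj : Function.Injective
      (fun k : ℕ => if k = 0 then 1 else if k = 1 then 2 else if k = 2 then 0 else k) := by
    intro a b h
    simp only at h
    split_ifs at h <;> omega
  have hψ1 : IsPi n (renameF (fun k : ℕ => if k = 0 then 1 else if k = 1 then 2 else if k = 2 then 0 else k)
      (renameF (Equiv.swap i (i + 3)) ψ0)) := isPi_renameF hρinj hψ0a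
  have hψ1fv : (renameF (fun k : ℕ => if k = 0 then 1 else if k = 1 then 2 else if k = 2 then 0 else k)
      (renameF (Equiv.swap i (i + 3)) ψ0)).fv ⊆ {1, 2, i + 3} := by
    intro k hk
    rcases fv_renameF _ _ hk with ⟨m, hm, rfl⟩
    have hmem := hψ0afv hm
    simp only [Set.mem_insert_iff, Set.mem_singleton_iff] at hmem ⊢
    rcases hmem with rfl | rfl | rfl
    · simp
    · simp
    · right; right; simp
  obtain ⟨ψhat, hPi, hhatfv, hsem⟩ := (pairBind E n).2 _ hψ1 (i + 4) (by omega)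
    (fun k hk => by
      have := hψ1fv hk
      simp only [Set.mem_insert_iff, Set.mem_singleton_iff] at this
      simp only [Set.mem_Iio]
      omega)
  refine ⟨.ex (i + 3) ψhat, ⟨i + 3, ψhat, hPi, rfl⟩, ?_, ?_⟩
  · intro k hk
    obtain ⟨hk1, hk2⟩ := hk
    simp only [Set.mem_singleton_iff] at hk2 ⊢
    rcases hhatfv hk1 with h | ⟨h, hne⟩
    · exact h
    · exfalso
      have := hψ1fv h
      simp only [Set.mem_insert_iff, Set.mem_singleton_iff] at this hne
      push_neg at hne
      rcases this with rfl | rfl | rfl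
      · exact hne.1 rfl
      · exact hne.2 rfl
      · exact hk2 rfl
  · intro v x w hp
    calc Sat E v (.ex (i + 3) ψhat)
        ↔ ∃ a, Sat E (Function.update v (i + 3) a) ψhat := sat_ex
      _ ↔ ∃ a, Sat E (Function.update (val2 x w) (i + 3) a)
            (renameF (Equiv.swap i (i + 3)) ψ0) := by
          refine exists_congr fun a => ?_
          rw [hsem _ x w (by
            rw [Function.update_of_ne (by omega : (0:ℕ) ≠ i + 3)]; exact hp)]
          rw [sat_renameF hρinj]
          refine sat_congr _ fun k hk => ?_
          have := hψ0afv hk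
          simp only [Set.mem_insert_iff, Set.mem_singleton_iff] at this
          rcases this with rfl | rfl | rfl
          · show upd12 (Function.update v (i+3) a) x w 1 = Function.update (val2 x w) (i+3) a 0
            rw [Function.update_of_ne (by omega : (0:ℕ) ≠ i+3)]
            show Function.update (Function.update (Function.update v (i+3) a) 1 x) 2 w 1
              = val2 x w 0
            rw [Function.update_of_ne (by omega : (1:ℕ) ≠ 2), Function.update_self]
            rfl
          · show upd12 (Function.update v (i+3) a) x w 2 = Function.update (val2 x w) (i+3) a 1
            rw [Function.update_of_ne (by omega : (1:ℕ) ≠ i+3)]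
            show Function.update (Function.update (Function.update v (i+3) a) 1 x) 2 w 2
              = val2 x w 1
            rw [Function.update_self]
            rfl
          · have hρj : (if i+3 = 0 then 1 else if i+3 = 1 then 2 else if i+3 = 2 then 0 else i+3) = i+3 := by
              rw [if_neg (by omega), if_neg (by omega), if_neg (by omega)]
            show upd12 (Function.update v (i+3) a) x w
                (if i+3 = 0 then 1 else if i+3 = 1 then 2 else if i+3 = 2 then 0 else i+3)
                = Function.update (val2 x w) (i+3) a (i+3)
            rw [hρj, Function.update_self]
            show Function.update (Function.update (Function.update v (i+3) a) 1 x) 2 w (i+3) = a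
            rw [Function.update_of_ne (by omega : i+3 ≠ 2),
              Function.update_of_ne (by omega : i+3 ≠ 1), Function.update_self]
      _ ↔ Sat E (val2 x w) (.ex (i + 3) (renameF (Equiv.swap i (i + 3)) ψ0)) := sat_ex.symm
      _ ↔ Sat E (val2 x w) (.ex i ψ0) := halpha _

end Infra4
section Infra5

open Fml

variable {M : Type}

theorem sep_scheme_iff_sepMinus_scheme (E : M → M → Prop) (n : ℕ) (hM : SatDB0 E) :
    SepScheme E (IsSigma (n + 1)) ↔ SepMinusScheme E (IsSigma (n + 1)) := by
  obtain ⟨hext, ⟨e, he⟩, hpair, hunion, hcart, hsep0⟩ := hM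
  constructor
  · -- easy direction
    intro hS φ hφ hfv0 p
    have hfv01 : φ.fv ⊆ {0, 1} := by
      intro k hk
      exact Or.inl (hfv0 hk)
    obtain ⟨q, hq⟩ := hS φ hφ hfv01 e p
    refine ⟨q, fun x => (hq x).trans (and_congr_right fun _ => sat_congr φ fun k hk => ?_)⟩
    have hk0 : k = 0 := hfv0 hk
    subst hk0
    rfl
  · -- hard direction
    intro hS φ hφ hfv v0 p
    obtain ⟨θ, hθSig, hθfv, hθsem⟩ := main_theta E hφ hfv
    obtain ⟨b, hb⟩ := hpair v0 v0
    obtain ⟨r, hr⟩ := hcart p b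
    obtain ⟨q', hq'⟩ := hS θ hθSig hθfv r
    have hδq : IsDelta0 (Fml.ex 2 ((Fml.mem 2 1).and (.ex 3 ((Fml.mem 3 2).and
        ((Fml.mem 0 3).and (.all 4 ((Fml.mem 4 3).imp (Fml.eq 4 0)))))))) :=
      .bex (by omega) (.bex (by omega) (.and (.mem _ _) (.ball (by omega) (.eq _ _))))
    have hδqfv : (Fml.ex 2 ((Fml.mem 2 1).and (.ex 3 ((Fml.mem 3 2).and
        ((Fml.mem 0 3).and (.all 4 ((Fml.mem 4 3).imp (Fml.eq 4 0)))))))).fv ⊆ {0, 1} := by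
      intro k hk
      simp only [fv, Set.mem_diff, Set.mem_union, Set.mem_insert_iff,
        Set.mem_singleton_iff] at hk
      simp only [Set.mem_insert_iff, Set.mem_singleton_iff]
      omega
    obtain ⟨q, hq⟩ := hsep0 _ hδq hδqfv q' p
    have hδsem : ∀ x : M, Sat E (val2 x q') (Fml.ex 2 ((Fml.mem 2 1).and (.ex 3 ((Fml.mem 3 2).and
        ((Fml.mem 0 3).and (.all 4 ((Fml.mem 4 3).imp (Fml.eq 4 0)))))))) ↔
        ∃ Z, E Z q' ∧ ∃ S, E S Z ∧ E x S ∧ ∀ u, E u S → u = x := by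
      intro x
      simp only [Sat, SatIn, Set.mem_univ, true_and, true_implies, val2,
        Function.update_self,
        Function.update_of_ne (by omega : (1:ℕ) ≠ 2),
        Function.update_of_ne (by omega : (2:ℕ) ≠ 3),
        Function.update_of_ne (by omega : (0:ℕ) ≠ 3),
        Function.update_of_ne (by omega : (0:ℕ) ≠ 2),
        Function.update_of_ne (by omega : (3:ℕ) ≠ 4),
        Function.update_of_ne (by omega : (0:ℕ) ≠ 4)]
      simp only [if_pos rfl, if_neg (by omega : ¬ (1:ℕ) = 0), if_true]
    refine ⟨q, fun x => (hq x).trans ?_⟩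
    constructor
    · rintro ⟨hp, hδ⟩
      obtain ⟨Z, hZq', S, hSZ, hxS, hSx⟩ := (hδsem x).mp hδ
      obtain ⟨hZr, hZθ⟩ := (hq' Z).mp hZq'
      obtain ⟨x₁, y₁, hx₁p, hy₁b, hZpair⟩ := (hr Z).mp hZr
      have hy₁ : y₁ = v0 := ((hb y₁).mp hy₁b).elim id id
      subst hy₁
      have hφ1 : Sat E (val2 x₁ y₁) φ := (hθsem (fun _ => Z) x₁ y₁ hZpair).mp hZθ
      obtain ⟨S₀, T₀, hS₀, hT₀, hZ₀⟩ := hZpair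
      have hxx₁ : x = x₁ := by
        rcases (hZ₀ S).mp hSZ with h | h
        · have := (hS₀ x).mp (h ▸ hxS)
          exact this.elim id id
        · have hx₁T : E x₁ T₀ := (hT₀ x₁).mpr (Or.inl rfl)
          exact (hSx x₁ (h ▸ hx₁T)).symm
      refine ⟨hp, ?_⟩
      rw [hxx₁]
      exact hφ1
    · rintro ⟨hp, hφx⟩
      obtain ⟨S, hS⟩ := hpair x x
      obtain ⟨T, hT⟩ := hpair x v0
      obtain ⟨Z, hZ⟩ := hpair S T
      have hZpair : IsOPairOf E Z x v0 := ⟨S, T, hS, hT, hZ⟩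
      have hZr : E Z r := (hr Z).mpr ⟨x, v0, hp, (hb v0).mpr (Or.inl rfl), hZpair⟩
      have hZθ : Sat E (fun _ => Z) θ := (hθsem (fun _ => Z) x v0 hZpair).mpr hφx
      have hZq' : E Z q' := (hq' Z).mpr ⟨hZr, hZθ⟩
      exact ⟨hp, (hδsem x).mpr ⟨Z, hZq', S, (hZ S).mpr (Or.inl rfl),
        (hS x).mpr (Or.inl rfl), fun u hu => ((hS u).mp hu).elim id id⟩⟩

end Infra5

/-- Over DB₀, Sep(Σ_{n+1}) is deductively equivalent to the
parameter-free schema Sep⁻(Σ_{n+1}). -/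
theorem sep_iff_sepMinus (n : ℕ) (M : Type) (E : M → M → Prop)
    (hM : SatDB0 E) :
    SepScheme E (IsSigma (n + 1)) ↔ SepMinusScheme E (IsSigma (n + 1)) := by
  exact sep_scheme_iff_sepMinus_scheme E n hM

end FOSet
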